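/- If h : ℝ → ℝ is continuously differentiable and both h and h' are square-integrable, then the function ρ(x) = ∫ h(y - x) h(y) dy is twice continuously differentiable and its derivatives ρ' and ρ'' are bounded. -/

import Mathlib

open MeasureTheory Set

noncomputable section

namespace AutoCorrAux

local instance : Fact ((1:ENNReal) ≤ 2) := ⟨one_le_two⟩

/-- translation as a continuous map -/
def shiftCM (x : ℝ) : C(ℝ, ℝ) := ⟨fun y => y - x, by continuity⟩

lemma continuous_shiftCM : Continuous shiftCM :=
  ContinuousMap.continuous_of_continuous_uncurry _ (by
    exact continuous_snd.sub continuous_fst)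

lemma shiftMP (x : ℝ) : MeasurePreserving (shiftCM x) volume volume :=
  measurePreserving_sub_right volume x

/-- translate of an L² function, as an element of L² -/
def shiftLp (f : ℝ → ℝ) (hf : MemLp f 2 volume) (x : ℝ) : Lp ℝ 2 (volume : Measure ℝ) :=
  Lp.compMeasurePreserving (shiftCM x) (shiftMP x) (hf.toLp f)

lemma shiftLp_ae (f : ℝ → ℝ) (hf : MemLp f 2 volume) (x : ℝ) :
    shiftLp f hf x =ᵐ[volume] fun y => f (y - x) := by
  refine (Lp.coeFn_compMeasurePreserving _ _).trans ?_
  have := (shiftMP x).quasiMeasurePreserving.ae_eq_comp hf.coeFn_toLp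
  exact this

lemma corr_eq_inner (f g : ℝ → ℝ) (hf : MemLp f 2 volume) (hg : MemLp g 2 volume) (x : ℝ) :
    ∫ y, f (y - x) * g y = inner ℝ (shiftLp f hf x) (hg.toLp g) := by
  rw [L2.inner_def]
  refine integral_congr_ae ?_
  filter_upwards [shiftLp_ae f hf x, hg.coeFn_toLp] with y h1 h2
  simp [h1, h2, RCLike.inner_apply, mul_comm]


lemma continuous_shiftLp (f : ℝ → ℝ) (hf : MemLp f 2 volume) :
    Continuous (shiftLp f hf) := by
  exact Continuous.compMeasurePreservingLp continuous_const continuous_shiftCM shiftMP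
    (by norm_num)

lemma corr_continuous (f g : ℝ → ℝ) (hf : MemLp f 2 volume) (hg : MemLp g 2 volume) :
    Continuous fun x => ∫ y, f (y - x) * g y := by
  have : Continuous fun x => (inner ℝ (shiftLp f hf x) (hg.toLp g) : ℝ) :=
    (continuous_shiftLp f hf).inner continuous_const
  simpa [funext fun x => corr_eq_inner f g hf hg x] using this

lemma corr_bound (f g : ℝ → ℝ) (hf : MemLp f 2 volume) (hg : MemLp g 2 volume) (x : ℝ) :
    |∫ y, f (y - x) * g y| ≤ (eLpNorm f 2 volume).toReal * (eLpNorm g 2 volume).toReal := by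
  rw [corr_eq_inner f g hf hg x]
  calc |(inner ℝ (shiftLp f hf x) (hg.toLp g) : ℝ)| ≤ ‖shiftLp f hf x‖ * ‖hg.toLp g‖ :=
        abs_real_inner_le_norm _ _
    _ = (eLpNorm f 2 volume).toReal * (eLpNorm g 2 volume).toReal := by
        rw [shiftLp, Lp.norm_compMeasurePreserving, Lp.norm_toLp, Lp.norm_toLp]

lemma corr_integrable (f g : ℝ → ℝ) (hf : MemLp f 2 volume) (hg : MemLp g 2 volume) (x : ℝ) :
    Integrable (fun y => f (y - x) * g y) volume := by
  have := L2.integrable_inner (𝕜 := ℝ) (shiftLp f hf x) (hg.toLp g)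
  refine this.congr ?_
  filter_upwards [shiftLp_ae f hf x, hg.coeFn_toLp] with y h1 h2
  simp [h1, h2, RCLike.inner_apply, mul_comm]


lemma corr_sub_eq (f g : ℝ → ℝ) (hf1 : ContDiff ℝ 1 f) (hf : MemLp f 2 volume)
    (hf' : MemLp (deriv f) 2 volume) (hg : MemLp g 2 volume) {a b : ℝ} (hab : a ≤ b) :
    (∫ y, f (y - b) * g y) - ∫ y, f (y - a) * g y
      = -∫ t in Set.Ioc a b, ∫ y, deriv f (y - t) * g y := by
  have hc' : Continuous (deriv f) := hf1.continuous_deriv le_rfl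
  -- pointwise FTC
  have step1 : ∀ y : ℝ, f (y - b) - f (y - a) = -∫ t in Set.Ioc a b, deriv f (y - t) := by
    intro y
    have h1 : (∫ t in a..b, deriv f (y - t)) = f (y - a) - f (y - b) := by
      rw [intervalIntegral.integral_comp_sub_left (deriv f) y]
      exact intervalIntegral.integral_deriv_eq_sub
        (fun x _ => (hf1.differentiable one_ne_zero).differentiableAt) (hc'.intervalIntegrable _ _)
    rw [intervalIntegral.integral_of_le hab] at h1
    rw [h1]; ring
  -- product integrability
  haveI : IsFiniteMeasure (volume.restrict (Set.Ioc a b)) := by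
    constructor
    rw [Measure.restrict_apply_univ, Real.volume_Ioc]
    exact ENNReal.ofReal_lt_top
  have haesm : AEStronglyMeasurable (Function.uncurry fun y t => deriv f (y - t) * g y)
      (volume.prod (volume.restrict (Set.Ioc a b))) := by
    have h1 : Continuous fun z : ℝ × ℝ => deriv f (z.1 - z.2) :=
      hc'.comp (continuous_fst.sub continuous_snd)
    exact h1.aestronglyMeasurable.mul hg.aestronglyMeasurable.comp_fst
  have prodInt : Integrable (Function.uncurry fun y t => deriv f (y - t) * g y)
      (volume.prod (volume.restrict (Set.Ioc a b))) := by
    rw [integrable_prod_iff' haesm]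
    constructor
    · exact Filter.Eventually.of_forall fun t => corr_integrable (deriv f) g hf' hg t
    · refine Integrable.mono' (integrable_const
        ((eLpNorm (deriv f) 2 volume).toReal * (eLpNorm g 2 volume).toReal))
        haesm.norm.prod_swap.integral_prod_right' ?_
      refine Filter.Eventually.of_forall fun t => ?_
      simp only [Function.uncurry_apply_pair, Prod.swap_prod_mk]
      have hb := corr_bound (fun y => |deriv f y|) (fun y => |g y|) hf'.abs hg.abs t
      have hnn : 0 ≤ ∫ y, ‖deriv f (y - t) * g y‖ :=
        integral_nonneg fun y => norm_nonneg _
      rw [Real.norm_eq_abs, abs_of_nonneg hnn]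
      calc (∫ y, ‖deriv f (y - t) * g y‖)
          = ∫ y, |deriv f (y - t)| * |g y| := by
            simp only [Real.norm_eq_abs, abs_mul]
        _ ≤ (eLpNorm (fun y => |deriv f y|) 2 volume).toReal
              * (eLpNorm (fun y => |g y|) 2 volume).toReal :=
            le_trans (le_abs_self _) hb
        _ = (eLpNorm (deriv f) 2 volume).toReal * (eLpNorm g 2 volume).toReal := by
            rw [show (fun y => |deriv f y|) = fun y => ‖deriv f y‖ from rfl,
              show (fun y => |g y|) = fun y => ‖g y‖ from rfl, eLpNorm_norm, eLpNorm_norm]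
  -- main computation
  have hInt_b := corr_integrable f g hf hg b
  have hInt_a := corr_integrable f g hf hg a
  calc (∫ y, f (y - b) * g y) - ∫ y, f (y - a) * g y
      = ∫ y, (f (y - b) * g y - f (y - a) * g y) := (integral_sub hInt_b hInt_a).symm
    _ = ∫ y, (-∫ t in Set.Ioc a b, deriv f (y - t)) * g y := by
        refine integral_congr_ae (Filter.Eventually.of_forall fun y => ?_)
        show f (y - b) * g y - f (y - a) * g y
          = (-∫ t in Set.Ioc a b, deriv f (y - t)) * g y
        rw [← sub_mul, step1 y]
    _ = -∫ y, ∫ t in Set.Ioc a b, deriv f (y - t) * g y := by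
        rw [← integral_neg]
        refine integral_congr_ae (Filter.Eventually.of_forall fun y => ?_)
        show (-∫ t in Set.Ioc a b, deriv f (y - t)) * g y
          = -∫ t in Set.Ioc a b, deriv f (y - t) * g y
        rw [neg_mul, MeasureTheory.integral_mul_const]
    _ = -∫ t in Set.Ioc a b, ∫ y, deriv f (y - t) * g y := by
        rw [integral_integral_swap prodInt]


lemma corr_interval (f g : ℝ → ℝ) (hf1 : ContDiff ℝ 1 f) (hf : MemLp f 2 volume)
    (hf' : MemLp (deriv f) 2 volume) (hg : MemLp g 2 volume) (a b : ℝ) :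
    (∫ y, f (y - b) * g y) - ∫ y, f (y - a) * g y
      = -∫ t in a..b, ∫ y, deriv f (y - t) * g y := by
  rcases le_total a b with hab | hab
  · rw [intervalIntegral.integral_of_le hab]
    exact corr_sub_eq f g hf1 hf hf' hg hab
  · rw [intervalIntegral.integral_of_ge hab]
    have := corr_sub_eq f g hf1 hf hf' hg hab
    linarith
lemma corr_hasDerivAt (f g : ℝ → ℝ) (hf1 : ContDiff ℝ 1 f) (hf : MemLp f 2 volume)
    (hf' : MemLp (deriv f) 2 volume) (hg : MemLp g 2 volume) (x : ℝ) :
    HasDerivAt (fun x => ∫ y, f (y - x) * g y) (-(∫ y, deriv f (y - x) * g y)) x := by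
  set G : ℝ → ℝ := fun t => ∫ y, deriv f (y - t) * g y with hG
  have hGc : Continuous G := corr_continuous (deriv f) g hf' hg
  have key : (fun x : ℝ => ∫ y, f (y - x) * g y)
      = fun x : ℝ => (∫ y, f (y - 0) * g y) + -∫ t in (0:ℝ)..x, G t := by
    funext b
    have := corr_interval f g hf1 hf hf' hg 0 b
    simp only [hG]
    linarith
  rw [key]
  have h2 : HasDerivAt (fun u : ℝ => ∫ t in (0:ℝ)..u, G t) (G x) x :=
    intervalIntegral.integral_hasDerivAt_right (hGc.intervalIntegrable _ _)
      (hGc.stronglyMeasurableAtFilter _ _) hGc.continuousAt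
  exact h2.neg.const_add _

end AutoCorrAux

open AutoCorrAux in
/-- If `h : ℝ → ℝ` is continuously differentiable and both `h` and `h'` are
square-integrable, then the autocorrelation `ρ(x) = ∫ h(y - x) h(y) dy` is twice
continuously differentiable and its derivatives `ρ'` and `ρ''` are bounded. -/
theorem autocorrelation_contDiff_two_bounded_derivs
    (h : ℝ → ℝ) (hC1 : ContDiff ℝ 1 h)
    (hL2 : MemLp h 2 volume)
    (hL2' : MemLp (deriv h) 2 volume)
    (ρ : ℝ → ℝ) (hρ : ∀ x : ℝ, ρ x = ∫ y : ℝ, h (y - x) * h y) :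
    ContDiff ℝ 2 ρ ∧
      ∃ C : ℝ, (∀ x : ℝ, |deriv ρ x| ≤ C) ∧ (∀ x : ℝ, |deriv (deriv ρ) x| ≤ C) := by
  have hρfun : ρ = fun x => ∫ y : ℝ, h (y - x) * h y := funext hρ
  set F₂ : ℝ → ℝ := fun z => ∫ y, h (y - z) * deriv h y with hF₂
  set G₂ : ℝ → ℝ := fun z => ∫ y, deriv h (y - z) * deriv h y with hG₂
  -- change of variables : ∫ deriv h (y - x) * h y = F₂ (-x)
  have chg : ∀ x : ℝ, (∫ y, deriv h (y - x) * h y) = F₂ (-x) := by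
    intro x
    calc (∫ y, deriv h (y - x) * h y)
        = ∫ y, deriv h (y - x) * h (y - x + x) := by
          refine integral_congr_ae (Filter.Eventually.of_forall fun y => ?_)
          show deriv h (y - x) * h y = deriv h (y - x) * h (y - x + x)
          rw [sub_add_cancel]
      _ = ∫ u, deriv h u * h (u + x) :=
          integral_sub_right_eq_self (fun u => deriv h u * h (u + x)) x
      _ = ∫ u, h (u - -x) * deriv h u := by
          refine integral_congr_ae (Filter.Eventually.of_forall fun u => ?_)
          show deriv h u * h (u + x) = h (u - -x) * deriv h u
          rw [sub_neg_eq_add, mul_comm]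
  -- first derivative
  have hd1 : ∀ x : ℝ, HasDerivAt ρ (-(F₂ (-x))) x := by
    intro x
    have := corr_hasDerivAt h h hC1 hL2 hL2' hL2 x
    rw [chg x] at this
    rwa [hρfun]
  have hderiv1 : deriv ρ = fun x => -(F₂ (-x)) := funext fun x => (hd1 x).deriv
  -- second derivative
  have hd2' : ∀ z : ℝ, HasDerivAt F₂ (-(G₂ z)) z := fun z =>
    corr_hasDerivAt h (deriv h) hC1 hL2 hL2' hL2' z
  have hd2 : ∀ x : ℝ, HasDerivAt (deriv ρ) (-(G₂ (-x))) x := by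
    intro x
    rw [hderiv1]
    have hcomp : HasDerivAt (fun x : ℝ => F₂ (-x)) (G₂ (-x)) x := by
      have := HasDerivAt.comp x (hd2' (-x)) (hasDerivAt_neg x)
      rw [neg_mul_neg, mul_one] at this
      exact this
    exact hcomp.neg
  have hderiv2 : deriv (deriv ρ) = fun x => -(G₂ (-x)) := funext fun x => (hd2 x).deriv
  have hG₂c : Continuous G₂ := corr_continuous (deriv h) (deriv h) hL2' hL2'
  constructor
  · have h2 : (2 : WithTop ℕ∞) = 1 + 1 := by norm_num
    rw [h2, contDiff_succ_iff_deriv]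
    refine ⟨fun x => (hd1 x).differentiableAt, by simp, ?_⟩
    rw [contDiff_one_iff_deriv]
    exact ⟨fun x => (hd2 x).differentiableAt, by
      rw [hderiv2]; exact ((hG₂c.comp continuous_neg).neg)⟩
  · set A : ℝ := (eLpNorm h 2 volume).toReal with hA
    set B : ℝ := (eLpNorm (deriv h) 2 volume).toReal with hB
    refine ⟨A * B + B * B, fun x => ?_, fun x => ?_⟩
    · rw [hderiv1]
      have := corr_bound h (deriv h) hL2 hL2' (-x)
      have hBB : 0 ≤ B * B := mul_nonneg ENNReal.toReal_nonneg ENNReal.toReal_nonneg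
      calc |(fun x => -(F₂ (-x))) x| = |F₂ (-x)| := by simp
        _ ≤ A * B := this
        _ ≤ A * B + B * B := le_add_of_nonneg_right hBB
    · rw [hderiv2]
      have := corr_bound (deriv h) (deriv h) hL2' hL2' (-x)
      have hAB : 0 ≤ A * B := mul_nonneg ENNReal.toReal_nonneg ENNReal.toReal_nonneg
      calc |(fun x => -(G₂ (-x))) x| = |G₂ (-x)| := by simp
        _ ≤ B * B := this
        _ ≤ A * B + B * B := le_add_of_nonneg_left hAB
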